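/- Let C be a d²×d² positive semidefinite matrix, viewed as a d×d block matrix with blocks C_{ij} of size d. If all diagonal blocks are equal to a common correlation matrix C_{11}, then for every completely positive trace-preserving map E, the Schur product J(E) ∘ C is the Jamiołkowski matrix of a completely positive trace-preserving map. -/

import Mathlib

open Matrix
open scoped Kronecker ComplexOrder

noncomputable section

/-- The Schur-product (Hadamard-product) superoperator `X ↦ X ∘ C`. -/
def schurMap {d : ℕ} (C : Matrix (Fin d) (Fin d) ℂ) :
    Matrix (Fin d) (Fin d) ℂ →ₗ[ℂ] Matrix (Fin d) (Fin d) ℂ where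
  toFun X := X.hadamard C
  map_add' X Y := by ext i j; simp [Matrix.hadamard]; ring
  map_smul' c X := by ext i j; simp [Matrix.hadamard]; ring

/-- The extension `E ⊗ I_n` of a superoperator, applied to a bipartite matrix. -/
def tensExt {d : ℕ} (E : Matrix (Fin d) (Fin d) ℂ →ₗ[ℂ] Matrix (Fin d) (Fin d) ℂ) (n : ℕ)
    (ρ : Matrix (Fin d × Fin n) (Fin d × Fin n) ℂ) :
    Matrix (Fin d × Fin n) (Fin d × Fin n) ℂ :=
  Matrix.of fun p q => ∑ i, ∑ j, (E (Matrix.single i j 1)) p.1 q.1 * ρ (i, p.2) (j, q.2)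

/-- Complete positivity: every extension `E ⊗ I_n` preserves positive semidefiniteness. -/
def IsCP {d : ℕ} (E : Matrix (Fin d) (Fin d) ℂ →ₗ[ℂ] Matrix (Fin d) (Fin d) ℂ) : Prop :=
  ∀ (n : ℕ) (ρ : Matrix (Fin d × Fin n) (Fin d × Fin n) ℂ),
    ρ.PosSemidef → (tensExt E n ρ).PosSemidef

/-- Trace preservation. -/
def IsTP {d : ℕ} (E : Matrix (Fin d) (Fin d) ℂ →ₗ[ℂ] Matrix (Fin d) (Fin d) ℂ) : Prop :=
  ∀ X, (E X).trace = X.trace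

/-- Quantum channel: completely positive and trace-preserving. -/
def IsCPTP {d : ℕ} (E : Matrix (Fin d) (Fin d) ℂ →ₗ[ℂ] Matrix (Fin d) (Fin d) ℂ) : Prop :=
  IsCP E ∧ IsTP E

/-- The Jamiołkowski matrix `J(E) = (E ⊗ I)(|Ψ⟩⟨Ψ|)`, with entries
`J(E)_{(i,k),(j,l)} = E(|k⟩⟨l|)_{i j} / d`. -/
def jam {d : ℕ} (E : Matrix (Fin d) (Fin d) ℂ →ₗ[ℂ] Matrix (Fin d) (Fin d) ℂ) :
    Matrix (Fin d × Fin d) (Fin d × Fin d) ℂ :=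
  Matrix.of fun p q => (E (Matrix.single p.2 q.2 1)) p.1 q.1 / d

/-- Controlled unitary `U = Σ_i |i⟩⟨i| ⊗ U_i`. -/
def ctrl {d n : ℕ} (Us : Fin d → Matrix (Fin n) (Fin n) ℂ) :
    Matrix (Fin d × Fin n) (Fin d × Fin n) ℂ :=
  Matrix.of fun p q => (if p.1 = q.1 then (1 : ℂ) else 0) * (Us p.1) p.2 q.2



open scoped MatrixOrder in
/-- Kronecker product of PSD matrices is PSD. -/
lemma kron_psd {m n : Type*} [Fintype m] [Fintype n] [DecidableEq m] [DecidableEq n]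
    {A : Matrix m m ℂ} {B : Matrix n n ℂ} (hA : A.PosSemidef) (hB : B.PosSemidef) :
    (A ⊗ₖ B).PosSemidef := by
  obtain ⟨P, hP⟩ : ∃ P : Matrix m m ℂ, A = Pᴴ * P :=
    CStarAlgebra.nonneg_iff_eq_star_mul_self.mp hA.nonneg
  obtain ⟨Q, hQ⟩ : ∃ Q : Matrix n n ℂ, B = Qᴴ * Q :=
    CStarAlgebra.nonneg_iff_eq_star_mul_self.mp hB.nonneg
  have key : A ⊗ₖ B = (P ⊗ₖ Q)ᴴ * (P ⊗ₖ Q) := by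
    have hct : (P ⊗ₖ Q)ᴴ = Pᴴ ⊗ₖ Qᴴ := by
      ext ⟨i, j⟩ ⟨k, l⟩
      simp [conjTranspose_apply, kroneckerMap_apply]
    rw [hct, ← mul_kronecker_mul, ← hP, ← hQ]
  rw [key]
  exact posSemidef_conjTranspose_mul_self _

/-- Schur (Hadamard) product of PSD matrices is PSD. -/
lemma hadamard_psd {m : Type*} [Fintype m] [DecidableEq m]
    {A B : Matrix m m ℂ} (hA : A.PosSemidef) (hB : B.PosSemidef) :
    (A.hadamard B).PosSemidef := by
  have h : A.hadamard B = (A ⊗ₖ B).submatrix (fun i => (i, i)) (fun i => (i, i)) := by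
    ext i j
    simp [Matrix.hadamard, Matrix.submatrix, kroneckerMap_apply]
  rw [h]
  exact (kron_psd hA hB).submatrix _

/-- The candidate channel: `F(X)_{ij} = Σ_{k,l} X_{kl} E(|k⟩⟨l|)_{ij} C_{(i,k),(j,l)}`. -/
def Fmap {d : ℕ} (C : Matrix (Fin d × Fin d) (Fin d × Fin d) ℂ)
    (E : Matrix (Fin d) (Fin d) ℂ →ₗ[ℂ] Matrix (Fin d) (Fin d) ℂ) :
    Matrix (Fin d) (Fin d) ℂ →ₗ[ℂ] Matrix (Fin d) (Fin d) ℂ where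
  toFun X := Matrix.of fun i j =>
    ∑ k, ∑ l, X k l * (E (Matrix.single k l 1)) i j * C (i, k) (j, l)
  map_add' X Y := by
    ext i j
    simp [Finset.sum_add_distrib, add_mul]
  map_smul' c X := by
    ext i j
    simp [Finset.mul_sum, mul_assoc]

lemma Fmap_apply {d : ℕ} (C : Matrix (Fin d × Fin d) (Fin d × Fin d) ℂ)
    (E : Matrix (Fin d) (Fin d) ℂ →ₗ[ℂ] Matrix (Fin d) (Fin d) ℂ)
    (k l : Fin d) (i j : Fin d) :
    (Fmap C E (Matrix.single k l 1)) i j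
      = (E (Matrix.single k l 1)) i j * C (i, k) (j, l) := by
  simp only [Fmap, LinearMap.coe_mk, AddHom.coe_mk, Matrix.of_apply]
  rw [Finset.sum_eq_single k, Finset.sum_eq_single l]
  · simp [Matrix.single]
  · intro b _ hb
    simp [Matrix.single, Ne.symm hb]
  · intro h; exact absurd (Finset.mem_univ l) h
  · intro b _ hb
    apply Finset.sum_eq_zero
    intro c _
    simp [Matrix.single, Ne.symm hb]
  · intro h; exact absurd (Finset.mem_univ k) h

/-- if `C` is PSD with all diagonal `d×d` blocks equal to a common
correlation matrix, then `J(E) ∘ C` is the Jamiołkowski matrix of a CPTP map for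
every CPTP map `E`. -/
theorem stmt7 (d : ℕ) (C : Matrix (Fin d × Fin d) (Fin d × Fin d) ℂ)
    (hC : C.PosSemidef)
    (C0 : Matrix (Fin d) (Fin d) ℂ) (hC0 : C0.PosSemidef) (hC0diag : ∀ k, C0 k k = 1)
    (hblocks : ∀ i k l, C (i, k) (i, l) = C0 k l)
    (E : Matrix (Fin d) (Fin d) ℂ →ₗ[ℂ] Matrix (Fin d) (Fin d) ℂ) (hE : IsCPTP E) :
    ∃ F : Matrix (Fin d) (Fin d) ℂ →ₗ[ℂ] Matrix (Fin d) (Fin d) ℂ,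
      IsCPTP F ∧ jam F = (jam E).hadamard C := by
  classical
  refine ⟨Fmap C E, ⟨?_, ?_⟩, ?_⟩
  · -- complete positivity
    intro n ρ hρ
    set e : Fin (d * n) ≃ Fin d × Fin n := finProdFinEquiv.symm with he
    set f : Fin d × Fin (d * n) → Fin d × Fin d := fun p => ((e p.2).1, p.1) with hf
    set g : Fin d × Fin (d * n) → Fin d × Fin n := fun p => (p.1, (e p.2).2) with hg
    set σ : Matrix (Fin d × Fin (d * n)) (Fin d × Fin (d * n)) ℂ :=
      (C.submatrix f f).hadamard (ρ.submatrix g g) with hσ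
    have hσpsd : σ.PosSemidef := hadamard_psd (hC.submatrix f) (hρ.submatrix g)
    have hMpsd : (tensExt E (d * n) σ).PosSemidef := hE.1 (d * n) σ hσpsd
    set u : Fin d × Fin n → Fin d × Fin (d * n) := fun p => (p.1, finProdFinEquiv p) with hu
    have heq : tensExt (Fmap C E) n ρ = (tensExt E (d * n) σ).submatrix u u := by
      ext p q
      simp only [tensExt, Matrix.of_apply, Matrix.submatrix_apply, hσ, Matrix.hadamard,
        Matrix.submatrix_apply, hu, hf, hg, he, Equiv.symm_apply_apply]
      apply Finset.sum_congr rfl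
      intro k _
      apply Finset.sum_congr rfl
      intro l _
      rw [Fmap_apply]
      ring
    rw [heq]
    exact hMpsd.submatrix u
  · -- trace preservation
    intro X
    have htr : ∀ k l : Fin d, (E (Matrix.single k l 1)).trace = if k = l then 1 else 0 := by
      intro k l
      rw [hE.2]
      by_cases h : k = l
      · subst h
        simp [Matrix.trace, Matrix.diag, Matrix.single]
      · simp only [Matrix.trace, Matrix.diag, if_neg h]
        apply Finset.sum_eq_zero
        intro i _
        simp only [Matrix.single, Matrix.of_apply, ite_eq_right_iff, and_imp]
        intro hk hl
        exact absurd (hk.trans hl.symm) h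
    calc (Fmap C E X).trace
        = ∑ i, ∑ k, ∑ l, X k l * (E (Matrix.single k l 1)) i i * C (i, k) (i, l) := by
          simp [Matrix.trace, Matrix.diag, Fmap]
      _ = ∑ k, ∑ l, ∑ i, X k l * (E (Matrix.single k l 1)) i i * C0 k l := by
          rw [Finset.sum_comm]
          apply Finset.sum_congr rfl; intro k _
          rw [Finset.sum_comm]
          apply Finset.sum_congr rfl; intro l _
          apply Finset.sum_congr rfl; intro i _
          rw [hblocks]
      _ = ∑ k, ∑ l, X k l * C0 k l * (if k = l then 1 else 0) := by
          apply Finset.sum_congr rfl; intro k _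
          apply Finset.sum_congr rfl; intro l _
          rw [← htr k l]
          simp [Matrix.trace, Matrix.diag, Finset.mul_sum, Finset.sum_mul]
          ring_nf
          apply Finset.sum_congr rfl; intro i _; ring
      _ = X.trace := by
          simp [Finset.sum_ite_eq, Matrix.trace, Matrix.diag, hC0diag, mul_ite]
  · -- the Jamiołkowski matrix
    ext p q
    simp only [jam, Matrix.of_apply, Matrix.hadamard]
    rw [Fmap_apply]
    ring


end
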